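/- arXiv:0705.3485 — 6 statements merged into one kernel-verified Lean document; each statement's English description precedes it below -/
import Mathlib

section
/- Let C be a symmetric monoidal closed category and D ⊆ C a reflective full subcategory with reflector ψ ⊣ ι and unit η. If for all B in C and D' in D the internal hom [B, D'] lies in D (i.e. η : [B,D'] → ψ[B,D'] is an isomorphism), then for all B, B' in C the map ψ(η ⊗ 1) : ψ(B ⊗ B') → ψ(ψB ⊗ B') is an isomorphism. -/
open CategoryTheory MonoidalCategory MonoidalClosed

universe v u v' u'

theorem stmt0 {C : Type u} [Category.{v} C] {D : Type u'} [Category.{v'} D]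
    [MonoidalCategory C] [SymmetricCategory C] [MonoidalClosed C]
    (ι : D ⥤ C) [Reflective ι]
    (hideal : ∀ B E : C, IsIso ((reflectorAdjunction ι).unit.app E) →
      IsIso ((reflectorAdjunction ι).unit.app ((ihom B).obj E)))
    (B B' : C) :
    IsIso ((reflector ι).map ((reflectorAdjunction ι).unit.app B ⊗ₘ 𝟙 B')) := by
  have h1 : ∀ (c : D) (d : C),
      IsIso ((reflectorAdjunction ι).unit.app ((ihom d).obj (ι.obj c))) := by
    intro c d
    exact hideal d (ι.obj c) (Functor.essImage.unit_isIso (ι.obj_mem_essImage c))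
  have key : (∀ (c : D) (d : C),
        IsIso ((reflectorAdjunction ι).unit.app ((ihom d).obj (ι.obj c)))) →
      ∀ (d d' : C), IsIso ((reflector ι).map ((reflectorAdjunction ι).unit.app d ▷ d')) :=
    ((Monoidal.Reflective.isIso_tfae (reflectorAdjunction ι)).out 0 2).mp
  have h3 := key h1 B B'
  rw [tensorHom_id]
  exact h3
end

section
/- Let C be a symmetric monoidal closed category and D a reflective full subcategory with reflector ψ and unit η. If ψ(η_B ⊗ 1_{B'}) : ψ(B ⊗ B') → ψ(ψB ⊗ B') is an isomorphism for all B, B' in C, then for every B in C and every D'-object E (η_E iso), the internal hom [B, E] is again a D'-object, i.e. η_{[B,E]} is an isomorphism. -/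
/-!
STATEMENT 1: Conversely, if `ψ (η_B ⊗ 𝟙 B')` is an isomorphism for all `B B'`,
then for every `B` and every local `E` (i.e. `η_E` iso), the internal hom
`[B, E]` is local.
-/

open CategoryTheory MonoidalCategory MonoidalClosed

universe v u v' u'

theorem stmt1 {C : Type u} [Category.{v} C] {D : Type u'} [Category.{v'} D]
    [MonoidalCategory C] [SymmetricCategory C] [MonoidalClosed C]
    (ι : D ⥤ C) [Reflective ι]
    (h : ∀ B B' : C,
      IsIso ((reflector ι).map ((reflectorAdjunction ι).unit.app B ⊗ₘ 𝟙 B')))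
    (B E : C) (hE : IsIso ((reflectorAdjunction ι).unit.app E)) :
    IsIso ((reflectorAdjunction ι).unit.app ((ihom B).obj E)) := by
  set ψ := reflector ι with hψ
  set η := (reflectorAdjunction ι).unit with hη
  set A := (ihom B).obj E with hA
  haveI := h A B
  -- the uncurried retraction
  set g : B ⊗ ι.obj (ψ.obj A) ⟶ E :=
    (β_ B (ι.obj (ψ.obj A))).hom ≫ η.app (ι.obj (ψ.obj A) ⊗ B) ≫
      ι.map (inv (ψ.map (η.app A ⊗ₘ 𝟙 B))) ≫ ι.map (ψ.map (β_ A B).hom) ≫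
      ι.map (ψ.map ((ihom.ev B).app E)) ≫ inv (η.app E) with hg
  set r : ι.obj (ψ.obj A) ⟶ A := curry g with hr
  have key : η.app A ≫ r = 𝟙 A := by
    apply uncurry_injective
    rw [uncurry_natural_left, hr, uncurry_curry, uncurry_id_eq_ev, hg]
    -- braiding naturality
    have b1 : (B ◁ η.app A) ≫ (β_ B (ι.obj (ψ.obj A))).hom
        = (β_ B A).hom ≫ (η.app A ▷ B) := by
      exact BraidedCategory.braiding_naturality_right B (η.app A)
    have b2 : (η.app A ▷ B) ≫ η.app (ι.obj (ψ.obj A) ⊗ B)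
        = η.app (A ⊗ B) ≫ ι.map (ψ.map (η.app A ▷ B)) :=
      by simpa using η.naturality (η.app A ▷ B)
    have hwr : (η.app A ▷ B) = (η.app A ⊗ₘ 𝟙 B) := by
      simp [MonoidalCategory.tensorHom_def]
    have b3 : η.app (A ⊗ B) ≫ ι.map (ψ.map (β_ A B).hom)
        = (β_ A B).hom ≫ η.app (B ⊗ A) :=
      by simpa using (η.naturality (β_ A B).hom).symm
    have b4 : η.app (B ⊗ A) ≫ ι.map (ψ.map ((ihom.ev B).app E))
        = (ihom.ev B).app E ≫ η.app E :=
      by simpa using (η.naturality ((ihom.ev B).app E)).symm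
    slice_lhs 1 2 => rw [b1]
    slice_lhs 2 3 => rw [b2]
    rw [hwr]
    slice_lhs 3 4 => rw [← ι.map_comp, IsIso.hom_inv_id, ι.map_id]
    rw [Category.id_comp (ι.map (ψ.map (β_ A B).hom))]
    slice_lhs 2 3 => rw [b3]
    slice_lhs 3 4 => rw [b4]
    slice_lhs 1 2 => rw [SymmetricCategory.symmetry]
    simp
  have key2 : r ≫ η.app A = 𝟙 _ := by
    have nat : r ≫ η.app A = η.app (ι.obj (ψ.obj A)) ≫ ι.map (ψ.map r) :=
      by simpa using η.naturality r
    rw [nat, hη, unit_obj_eq_map_unit, ← ι.map_comp, ← ψ.map_comp]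
    rw [hη] at key
    rw [key]
    simp
    exact ι.map_id _
  exact ⟨r, key, key2⟩
end

section
/- Let C be a monoidal biclosed category (i.e. both - ⊗ B and B ⊗ - have right adjoints C/ - and -\C) and D a reflective full subcategory with reflector ψ and unit η. The following are equivalent: (1) for all B in C and E local, both E/B and B\E are local; (2) ψ(η ⊗ 1) and ψ(1 ⊗ η) are isomorphisms for all objects; (3) ψ(η ⊗ η) : ψ(B ⊗ B') → ψ(ψB ⊗ ψB') is an isomorphism for all objects. -/
open CategoryTheory MonoidalCategory

universe v u v' u'

section Helpers

variable {C : Type u} [Category.{v} C]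

lemma bij_postcomp {Z E E' : C} (e : E ⟶ E') [IsIso e] :
    Function.Bijective (fun g : Z ⟶ E => g ≫ e) := by
  constructor
  · intro a b hab
    simpa using congrArg (fun g => g ≫ inv e) hab
  · intro a; exact ⟨a ≫ inv e, by simp⟩

/-- Transfer bijectivity of precomposition along an iso of targets. -/
lemma bij_precomp_of_iso {X Y E E' : C} (f : X ⟶ Y) (e : E ⟶ E') [IsIso e]
    (h : Function.Bijective (fun g : Y ⟶ E => f ≫ g)) :
    Function.Bijective (fun g : Y ⟶ E' => f ≫ g) := by
  have key : (fun g : Y ⟶ E' => f ≫ g) =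
      (fun g : X ⟶ E => g ≫ e) ∘ (fun g : Y ⟶ E => f ≫ g) ∘ (fun g : Y ⟶ E' => g ≫ inv e) := by
    funext g; simp
  rw [key]
  exact (bij_postcomp e).comp (h.comp (bij_postcomp (inv e)))

/-- Conjugating precomposition bijectivity through an adjunction. -/
lemma bij_precomp_adj {D : Type u'} [Category.{v'} D] {F : C ⥤ D} {G : D ⥤ C}
    (adj : F ⊣ G) {X Y : C} (f : X ⟶ Y) (E : D) :
    Function.Bijective (fun g : F.obj Y ⟶ E => F.map f ≫ g) ↔
      Function.Bijective (fun g : Y ⟶ G.obj E => f ≫ g) := by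
  constructor
  · intro h
    have key : (fun g : Y ⟶ G.obj E => f ≫ g) =
        (adj.homEquiv X E) ∘ (fun g : F.obj Y ⟶ E => F.map f ≫ g) ∘ (adj.homEquiv Y E).symm := by
      funext g
      simp [Adjunction.homEquiv_naturality_left]
    rw [key]
    exact (adj.homEquiv X E).bijective.comp (h.comp (adj.homEquiv Y E).symm.bijective)
  · intro h
    have key : (fun g : F.obj Y ⟶ E => F.map f ≫ g) =
        (adj.homEquiv X E).symm ∘ (fun g : Y ⟶ G.obj E => f ≫ g) ∘ (adj.homEquiv Y E) := by
      funext g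
      simp [Adjunction.homEquiv_naturality_left_symm]
    rw [key]
    exact (adj.homEquiv X E).symm.bijective.comp (h.comp (adj.homEquiv Y E).bijective)

variable {D : Type u'} [Category.{v'} D] (ι : D ⥤ C) [Reflective ι]

/-- ψ of the unit is an isomorphism. -/
lemma psi_unit_isIso (A : C) : IsIso ((reflector ι).map ((reflectorAdjunction ι).unit.app A)) := by
  have h := (reflectorAdjunction ι).left_triangle_components A
  haveI : IsIso ((reflectorAdjunction ι).counit.app ((reflector ι).obj A)) := inferInstance
  haveI : IsIso ((reflector ι).map ((reflectorAdjunction ι).unit.app A) ≫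
      (reflectorAdjunction ι).counit.app ((reflector ι).obj A)) := by
    rw [h]; exact ⟨𝟙 _, by simp, by simp⟩
  exact IsIso.of_isIso_comp_right _ ((reflectorAdjunction ι).counit.app ((reflector ι).obj A))

/-- ψ f is an isomorphism iff precomposition with f into every local object is bijective. -/
lemma psi_map_isIso_iff {X Y : C} (f : X ⟶ Y) :
    IsIso ((reflector ι).map f) ↔
      ∀ E : C, IsIso ((reflectorAdjunction ι).unit.app E) →
        Function.Bijective (fun g : Y ⟶ E => f ≫ g) := by
  constructor
  · intro h E hE
    have h1 : Function.Bijective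
        (fun g : (reflector ι).obj Y ⟶ (reflector ι).obj E => (reflector ι).map f ≫ g) :=
      (isIso_iff_coyoneda_map_bijective _).mp h _
    have h2 := (bij_precomp_adj (reflectorAdjunction ι) f ((reflector ι).obj E)).mp h1
    have : IsIso (inv ((reflectorAdjunction ι).unit.app E)) := inferInstance
    exact bij_precomp_of_iso f (inv ((reflectorAdjunction ι).unit.app E)) h2
  · intro h
    apply isIso_of_coyoneda_map_bijective
    intro d
    exact (bij_precomp_adj (reflectorAdjunction ι) f d).mpr
      (h (ι.obj d) inferInstance)

/-- Locality criterion: if precomposition with every unit is surjective into X, X is local. -/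
lemma local_of_surj (X : C)
    (h : ∀ A : C, Function.Surjective
      (fun g : ι.obj ((reflector ι).obj A) ⟶ X => (reflectorAdjunction ι).unit.app A ≫ g)) :
    IsIso ((reflectorAdjunction ι).unit.app X) := by
  set η := (reflectorAdjunction ι).unit
  obtain ⟨r, hr0⟩ := h X (𝟙 X)
  have hr : η.app X ≫ r = 𝟙 X := hr0
  have hloc : IsIso (η.app (ι.obj ((reflector ι).obj X))) := inferInstance
  have hinj : Function.Injective (fun g : ι.obj ((reflector ι).obj X) ⟶
      ι.obj ((reflector ι).obj X) => η.app X ≫ g) := by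
    have := psi_unit_isIso ι X
    exact (((psi_map_isIso_iff ι (η.app X)).mp this) _ hloc).1
  have hsec : r ≫ η.app X = 𝟙 _ := by
    apply hinj
    show η.app X ≫ r ≫ η.app X = η.app X ≫ 𝟙 _
    rw [← Category.assoc, hr]; simp
  exact ⟨r, hr, hsec⟩

end Helpers

theorem stmt4 {C : Type u} [Category.{v} C] {D : Type u'} [Category.{v'} D]
    [MonoidalCategory C] [MonoidalClosed C]
    (rihom : C → C ⥤ C) (radj : ∀ B : C, tensorRight B ⊣ rihom B)
    (ι : D ⥤ C) [Reflective ι] :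
    ((∀ B E : C, IsIso ((reflectorAdjunction ι).unit.app E) →
        IsIso ((reflectorAdjunction ι).unit.app ((rihom B).obj E)) ∧
        IsIso ((reflectorAdjunction ι).unit.app ((ihom B).obj E))) ↔
      (∀ B B' : C,
        IsIso ((reflector ι).map ((reflectorAdjunction ι).unit.app B ⊗ₘ 𝟙 B')) ∧
        IsIso ((reflector ι).map (𝟙 B ⊗ₘ (reflectorAdjunction ι).unit.app B')))) ∧
    ((∀ B B' : C,
        IsIso ((reflector ι).map ((reflectorAdjunction ι).unit.app B ⊗ₘ 𝟙 B')) ∧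
        IsIso ((reflector ι).map (𝟙 B ⊗ₘ (reflectorAdjunction ι).unit.app B'))) ↔
      (∀ B B' : C,
        IsIso ((reflector ι).map
          ((reflectorAdjunction ι).unit.app B ⊗ₘ (reflectorAdjunction ι).unit.app B')))) := by
  set η := (reflectorAdjunction ι).unit with hη
  constructor
  · constructor
    · -- (1) → (2)
      intro h1 B B'
      constructor
      · -- ψ(η_B ⊗ₘ 𝟙 B')
        have hre : η.app B ⊗ₘ 𝟙 B' = (tensorRight B').map (η.app B) := by
          simp [tensorHom_id]
        rw [hre]
        rw [psi_map_isIso_iff]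
        intro E hE
        have hloc := (h1 B' E hE).1
        have hu := psi_unit_isIso ι B
        exact (bij_precomp_adj (radj B') (η.app B) E).mpr
          (((psi_map_isIso_iff ι (η.app B)).mp hu) _ hloc)
      · -- ψ(𝟙 B ⊗ₘ η_B')
        have hre : 𝟙 B ⊗ₘ η.app B' = (tensorLeft B).map (η.app B') := by
          simp [id_tensorHom]
        rw [hre]
        rw [psi_map_isIso_iff]
        intro E hE
        have hloc := (h1 B E hE).2
        have hu := psi_unit_isIso ι B'
        exact (bij_precomp_adj (ihom.adjunction B) (η.app B') E).mpr
          (((psi_map_isIso_iff ι (η.app B')).mp hu) _ hloc)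
    · -- (2) → (1)
      intro h2 B E hE
      constructor
      · -- E/B local
        apply local_of_surj
        intro A
        have hiso := (h2 A B).1
        have hbij := ((psi_map_isIso_iff ι (η.app A ⊗ₘ 𝟙 B)).mp hiso) E hE
        have hre : η.app A ⊗ₘ 𝟙 B = (tensorRight B).map (η.app A) := by
          simp [tensorHom_id]
        rw [hre] at hbij
        exact ((bij_precomp_adj (radj B) (η.app A) E).mp hbij).2
      · -- B\E local
        apply local_of_surj
        intro A
        have hiso := (h2 B A).2
        have hbij := ((psi_map_isIso_iff ι (𝟙 B ⊗ₘ η.app A)).mp hiso) E hE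
        have hre : 𝟙 B ⊗ₘ η.app A = (tensorLeft B).map (η.app A) := by
          simp [id_tensorHom]
        rw [hre] at hbij
        exact ((bij_precomp_adj (ihom.adjunction B) (η.app A) E).mp hbij).2
  · constructor
    · -- (2) → (3)
      intro h2 B B'
      have hfac : η.app B ⊗ₘ η.app B' = (𝟙 B ⊗ₘ η.app B') ≫ (η.app B ⊗ₘ 𝟙 _) := by
        rw [tensorHom_comp_tensorHom]; simp
      rw [hfac, Functor.map_comp]
      haveI := (h2 B B').2
      haveI := (h2 B ((reflector ι ⋙ ι).obj B')).1
      infer_instance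
    · -- (3) → (2)
      intro h3 B B'
      haveI hB' : IsIso (η.app ((reflector ι ⋙ ι).obj B')) := by
        rw [hη]
        exact Functor.essImage.unit_isIso (ι.obj_mem_essImage ((reflector ι).obj B'))
      haveI hB : IsIso (η.app ((reflector ι ⋙ ι).obj B)) := by
        rw [hη]
        exact Functor.essImage.unit_isIso (ι.obj_mem_essImage ((reflector ι).obj B))
      have claim1 : IsIso ((reflector ι).map
          (η.app B ⊗ₘ 𝟙 ((reflector ι ⋙ ι).obj B'))) := by
        have e1 : (η.app B ⊗ₘ 𝟙 ((reflector ι ⋙ ι).obj B')) ≫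
            (𝟙 ((reflector ι ⋙ ι).obj B) ⊗ₘ η.app ((reflector ι ⋙ ι).obj B')) =
            η.app B ⊗ₘ η.app ((reflector ι ⋙ ι).obj B') := by
          rw [tensorHom_comp_tensorHom]; simp
        have hcomp := h3 B ((reflector ι ⋙ ι).obj B')
        rw [← e1, Functor.map_comp] at hcomp
        haveI : IsIso ((reflector ι).map
            (𝟙 ((reflector ι ⋙ ι).obj B) ⊗ₘ η.app ((reflector ι ⋙ ι).obj B'))) := by
          haveI : IsIso (𝟙 ((reflector ι ⋙ ι).obj B) ⊗ₘ
              η.app ((reflector ι ⋙ ι).obj B')) := inferInstance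
          infer_instance
        exact @IsIso.of_isIso_comp_right _ _ _ _ _ _ _ ‹_› hcomp
      have claim2 : IsIso ((reflector ι).map
          (𝟙 ((reflector ι ⋙ ι).obj B) ⊗ₘ η.app B')) := by
        have e1 : (𝟙 ((reflector ι ⋙ ι).obj B) ⊗ₘ η.app B') ≫
            (η.app ((reflector ι ⋙ ι).obj B) ⊗ₘ 𝟙 ((reflector ι ⋙ ι).obj B')) =
            η.app ((reflector ι ⋙ ι).obj B) ⊗ₘ η.app B' := by
          rw [tensorHom_comp_tensorHom]; simp
        have hcomp := h3 ((reflector ι ⋙ ι).obj B) B'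
        rw [← e1, Functor.map_comp] at hcomp
        haveI : IsIso ((reflector ι).map
            (η.app ((reflector ι ⋙ ι).obj B) ⊗ₘ 𝟙 ((reflector ι ⋙ ι).obj B'))) := by
          haveI : IsIso (η.app ((reflector ι ⋙ ι).obj B) ⊗ₘ
              𝟙 ((reflector ι ⋙ ι).obj B')) := inferInstance
          infer_instance
        exact @IsIso.of_isIso_comp_right _ _ _ _ _ _ _ ‹_› hcomp
      constructor
      · have e2 : (η.app B ⊗ₘ 𝟙 B') ≫ (𝟙 ((reflector ι ⋙ ι).obj B) ⊗ₘ η.app B') =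
            η.app B ⊗ₘ η.app B' := by
          rw [tensorHom_comp_tensorHom]; simp
        have hcomp := h3 B B'
        rw [← e2, Functor.map_comp] at hcomp
        exact @IsIso.of_isIso_comp_right _ _ _ _ _ _ _ claim2 hcomp
      · have e2 : (𝟙 B ⊗ₘ η.app B') ≫ (η.app B ⊗ₘ 𝟙 ((reflector ι ⋙ ι).obj B')) =
            η.app B ⊗ₘ η.app B' := by
          rw [tensorHom_comp_tensorHom]; simp
        have hcomp := h3 B B'
        rw [← e2, Functor.map_comp] at hcomp
        exact @IsIso.of_isIso_comp_right _ _ _ _ _ _ _ claim1 hcomp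
end

section
/- Let C be a symmetric monoidal closed category, D a reflective full subcategory with reflector ψ such that ψ(η ⊗ 1) is always an isomorphism, and equip D with the tensor D ⊗_D D' = ψ(D ⊗ D'). Then for any three objects the canonical associator ψ(ψ(A ⊗ B) ⊗ C) ≅ ψ(A ⊗ ψ(B ⊗ C)) obtained from ψ(η ⊗ 1), ψ(1 ⊗ η) and the associator of C satisfies the pentagon identity. -/
/-!
STATEMENT 10: `C` symmetric monoidal closed, `D` reflective with `ψ(η ⊗ₘ 1)`
always invertible; equip `D` with the tensor `t d d' = ψ(d ⊗ₘ d')`.  The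
canonical associator `a : t (t A B) C ≅ t A (t B C)` is characterized by the
equation `ψ(η ⊗ₘ 1) ≫ a = ψ(α) ≫ ψ(1 ⊗ₘ η)` (this determines it uniquely since
`ψ(η ⊗ₘ 1)` is invertible, and it is the composite described in the paper).
Any such family of morphisms satisfies the pentagon identity, where the tensor
of morphisms in `D` is `ψ(ι f ⊗ₘ ι g)`.
-/

open CategoryTheory MonoidalCategory

universe v u v' u'

variable {C : Type u} [Category.{v} C] {D : Type u'} [Category.{v'} D]
  [MonoidalCategory C] [SymmetricCategory C] [MonoidalClosed C]

/-- The reflected tensor product of objects of `D`. -/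
noncomputable abbrev rtensor (ι : D ⥤ C) [Reflective ι] (d d' : D) : D :=
  (reflector ι).obj (ι.obj d ⊗ ι.obj d')

/-- The reflected tensor product of morphisms of `D`. -/
noncomputable abbrev rtensorHom (ι : D ⥤ C) [Reflective ι] {d₁ d₂ d₁' d₂' : D}
    (f : d₁ ⟶ d₂) (g : d₁' ⟶ d₂') : rtensor ι d₁ d₁' ⟶ rtensor ι d₂ d₂' :=
  (reflector ι).map (ι.map f ⊗ₘ ι.map g)

set_option maxHeartbeats 3200000 in
theorem stmt10 (ι : D ⥤ C) [Reflective ι]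
    (h1 : ∀ B B' : C,
      IsIso ((reflector ι).map ((reflectorAdjunction ι).unit.app B ⊗ₘ 𝟙 B')))
    (a : ∀ A B C' : D, rtensor ι (rtensor ι A B) C' ⟶ rtensor ι A (rtensor ι B C'))
    (ha : ∀ A B C' : D,
      (reflector ι).map
          ((reflectorAdjunction ι).unit.app (ι.obj A ⊗ ι.obj B) ⊗ₘ 𝟙 (ι.obj C')) ≫
        a A B C' =
      (reflector ι).map (α_ (ι.obj A) (ι.obj B) (ι.obj C')).hom ≫
        (reflector ι).map
          (𝟙 (ι.obj A) ⊗ₘ (reflectorAdjunction ι).unit.app (ι.obj B ⊗ ι.obj C')))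
    (W X Y Z : D) :
    rtensorHom ι (a W X Y) (𝟙 Z) ≫ a W (rtensor ι X Y) Z ≫
        rtensorHom ι (𝟙 W) (a X Y Z) =
      a (rtensor ι W X) Y Z ≫ a W X (rtensor ι Y Z) := by
  have nat : ∀ {b c : C} (f : b ⟶ c),
      f ≫ (reflectorAdjunction ι).unit.app c =
        (reflectorAdjunction ι).unit.app b ≫ ι.map ((reflector ι).map f) := by
    intro b c f
    simpa using (reflectorAdjunction ι).unit.naturality f
  set_option linter.unnecessarySimpa false in
  haveI i2 : IsIso ((reflector ι).map
      (((reflectorAdjunction ι).unit.app (ι.obj W ⊗ ι.obj X) ⊗ₘ 𝟙 (ι.obj Y)) ⊗ₘ 𝟙 (ι.obj Z))) := by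
    have h : (((reflectorAdjunction ι).unit.app (ι.obj W ⊗ ι.obj X) ⊗ₘ 𝟙 (ι.obj Y)) ⊗ₘ 𝟙 (ι.obj Z))
        = (α_ (ι.obj W ⊗ ι.obj X) (ι.obj Y) (ι.obj Z)).hom ≫
            ((reflectorAdjunction ι).unit.app (ι.obj W ⊗ ι.obj X) ⊗ₘ 𝟙 (ι.obj Y ⊗ ι.obj Z)) ≫
            (α_ (ι.obj ((reflector ι).obj (ι.obj W ⊗ ι.obj X))) (ι.obj Y) (ι.obj Z)).inv := by
      rw [← Category.assoc, Iso.eq_comp_inv]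
      simpa using associator_naturality
        ((reflectorAdjunction ι).unit.app (ι.obj W ⊗ ι.obj X)) (𝟙 (ι.obj Y)) (𝟙 (ι.obj Z))
    rw [h, Functor.map_comp, Functor.map_comp]
    haveI := h1 (ι.obj W ⊗ ι.obj X) (ι.obj Y ⊗ ι.obj Z)
    infer_instance
  haveI i1 : IsIso ((reflector ι).map
      ((reflectorAdjunction ι).unit.app (ι.obj ((reflector ι).obj (ι.obj W ⊗ ι.obj X)) ⊗ ι.obj Y)
        ⊗ₘ 𝟙 (ι.obj Z))) :=
    h1 (ι.obj ((reflector ι).obj (ι.obj W ⊗ ι.obj X)) ⊗ ι.obj Y) (ι.obj Z)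
  rw [← cancel_epi ((reflector ι).map
      ((reflectorAdjunction ι).unit.app (ι.obj ((reflector ι).obj (ι.obj W ⊗ ι.obj X)) ⊗ ι.obj Y)
        ⊗ₘ 𝟙 (ι.obj Z))),
    ← cancel_epi ((reflector ι).map
      (((reflectorAdjunction ι).unit.app (ι.obj W ⊗ ι.obj X) ⊗ₘ 𝟙 (ι.obj Y)) ⊗ₘ 𝟙 (ι.obj Z)))]
  simp only [rtensorHom, CategoryTheory.Functor.map_id]
  have ha' := fun A B C' => reassoc_of% (ha A B C')
  -- Right-hand side computation
  have hR : (reflector ι).map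
        (((reflectorAdjunction ι).unit.app (ι.obj W ⊗ ι.obj X) ⊗ₘ 𝟙 (ι.obj Y)) ⊗ₘ 𝟙 (ι.obj Z)) ≫
      (reflector ι).map
        ((reflectorAdjunction ι).unit.app (ι.obj ((reflector ι).obj (ι.obj W ⊗ ι.obj X)) ⊗ ι.obj Y)
          ⊗ₘ 𝟙 (ι.obj Z)) ≫
      (a (rtensor ι W X) Y Z ≫ a W X (rtensor ι Y Z)) =
      (reflector ι).map ((α_ (ι.obj W ⊗ ι.obj X) (ι.obj Y) (ι.obj Z)).hom ≫
        (α_ (ι.obj W) (ι.obj X) (ι.obj Y ⊗ ι.obj Z)).hom ≫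
        (𝟙 (ι.obj W) ⊗ₘ (𝟙 (ι.obj X) ⊗ₘ (reflectorAdjunction ι).unit.app (ι.obj Y ⊗ ι.obj Z))) ≫
        (𝟙 (ι.obj W) ⊗ₘ (reflectorAdjunction ι).unit.app
          (ι.obj X ⊗ ι.obj ((reflector ι).obj (ι.obj Y ⊗ ι.obj Z))))) := by
    rw [ha' (rtensor ι W X) Y Z]
    simp only [← Functor.map_comp_assoc]
    have c1 : (((reflectorAdjunction ι).unit.app (ι.obj W ⊗ ι.obj X) ⊗ₘ 𝟙 (ι.obj Y)) ⊗ₘ 𝟙 (ι.obj Z)) ≫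
        (α_ (ι.obj ((reflector ι).obj (ι.obj W ⊗ ι.obj X))) (ι.obj Y) (ι.obj Z)).hom ≫
        (𝟙 (ι.obj ((reflector ι).obj (ι.obj W ⊗ ι.obj X))) ⊗ₘ
          (reflectorAdjunction ι).unit.app (ι.obj Y ⊗ ι.obj Z)) =
        (α_ (ι.obj W ⊗ ι.obj X) (ι.obj Y) (ι.obj Z)).hom ≫
        (𝟙 (ι.obj W ⊗ ι.obj X) ⊗ₘ (reflectorAdjunction ι).unit.app (ι.obj Y ⊗ ι.obj Z)) ≫
          ((reflectorAdjunction ι).unit.app (ι.obj W ⊗ ι.obj X) ⊗ₘ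
            𝟙 (ι.obj ((reflector ι).obj (ι.obj Y ⊗ ι.obj Z)))) := by
      have h2 := associator_naturality
        ((reflectorAdjunction ι).unit.app (ι.obj W ⊗ ι.obj X)) (𝟙 (ι.obj Y)) (𝟙 (ι.obj Z))
      rw [id_tensorHom_id] at h2
      rw [reassoc_of% h2]
      congr 1
      rw [tensor_id_comp_id_tensor]
      symm
      exact id_tensor_comp_tensor_id _ _
    rw [c1]
    simp only [Functor.map_comp, Category.assoc]
    rw [ha W X (rtensor ι Y Z)]
    simp only [← Functor.map_comp_assoc, ← Functor.map_comp]
    congr 1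
    have c2 : (𝟙 (ι.obj W ⊗ ι.obj X) ⊗ₘ (reflectorAdjunction ι).unit.app (ι.obj Y ⊗ ι.obj Z)) ≫
        (α_ (ι.obj W) (ι.obj X) (ι.obj ((reflector ι).obj (ι.obj Y ⊗ ι.obj Z)))).hom =
        (α_ (ι.obj W) (ι.obj X) (ι.obj Y ⊗ ι.obj Z)).hom ≫
          (𝟙 (ι.obj W) ⊗ₘ (𝟙 (ι.obj X) ⊗ₘ (reflectorAdjunction ι).unit.app (ι.obj Y ⊗ ι.obj Z))) := by
      have h2 := associator_naturality (𝟙 (ι.obj W)) (𝟙 (ι.obj X))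
        ((reflectorAdjunction ι).unit.app (ι.obj Y ⊗ ι.obj Z))
      rw [id_tensorHom_id] at h2
      exact h2
    congr 1
    rw [reassoc_of% c2]
  -- Left-hand side computation
  have hL : (reflector ι).map
        (((reflectorAdjunction ι).unit.app (ι.obj W ⊗ ι.obj X) ⊗ₘ 𝟙 (ι.obj Y)) ⊗ₘ 𝟙 (ι.obj Z)) ≫
      (reflector ι).map
        ((reflectorAdjunction ι).unit.app (ι.obj ((reflector ι).obj (ι.obj W ⊗ ι.obj X)) ⊗ ι.obj Y)
          ⊗ₘ 𝟙 (ι.obj Z)) ≫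
      ((reflector ι).map (ι.map (a W X Y) ⊗ₘ 𝟙 (ι.obj Z)) ≫ a W (rtensor ι X Y) Z ≫
        (reflector ι).map (𝟙 (ι.obj W) ⊗ₘ ι.map (a X Y Z))) =
      (reflector ι).map (((α_ (ι.obj W) (ι.obj X) (ι.obj Y)).hom ⊗ₘ 𝟙 (ι.obj Z)) ≫
        (α_ (ι.obj W) (ι.obj X ⊗ ι.obj Y) (ι.obj Z)).hom ≫
        (𝟙 (ι.obj W) ⊗ₘ ((α_ (ι.obj X) (ι.obj Y) (ι.obj Z)).hom ≫
          (𝟙 (ι.obj X) ⊗ₘ (reflectorAdjunction ι).unit.app (ι.obj Y ⊗ ι.obj Z)) ≫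
          (reflectorAdjunction ι).unit.app
            (ι.obj X ⊗ ι.obj ((reflector ι).obj (ι.obj Y ⊗ ι.obj Z)))))) := by
    simp only [← Functor.map_comp_assoc]
    have c3 : (((reflectorAdjunction ι).unit.app (ι.obj W ⊗ ι.obj X) ⊗ₘ 𝟙 (ι.obj Y)) ⊗ₘ 𝟙 (ι.obj Z)) ≫
        ((reflectorAdjunction ι).unit.app (ι.obj ((reflector ι).obj (ι.obj W ⊗ ι.obj X)) ⊗ ι.obj Y)
          ⊗ₘ 𝟙 (ι.obj Z)) ≫
        (ι.map (a W X Y) ⊗ₘ 𝟙 (ι.obj Z)) =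
        ((((α_ (ι.obj W) (ι.obj X) (ι.obj Y)).hom ≫
            (𝟙 (ι.obj W) ⊗ₘ (reflectorAdjunction ι).unit.app (ι.obj X ⊗ ι.obj Y))) ⊗ₘ 𝟙 (ι.obj Z)) ≫
          ((reflectorAdjunction ι).unit.app
            (ι.obj W ⊗ ι.obj ((reflector ι).obj (ι.obj X ⊗ ι.obj Y))) ⊗ₘ 𝟙 (ι.obj Z))) := by
      rw [← comp_tensor_id, ← comp_tensor_id, ← comp_tensor_id]
      congr 1
      have n1 : ((reflectorAdjunction ι).unit.app (ι.obj W ⊗ ι.obj X) ⊗ₘ 𝟙 (ι.obj Y)) ≫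
          (reflectorAdjunction ι).unit.app
            (ι.obj ((reflector ι).obj (ι.obj W ⊗ ι.obj X)) ⊗ ι.obj Y) =
          (reflectorAdjunction ι).unit.app ((ι.obj W ⊗ ι.obj X) ⊗ ι.obj Y) ≫
            ι.map ((reflector ι).map
              ((reflectorAdjunction ι).unit.app (ι.obj W ⊗ ι.obj X) ⊗ₘ 𝟙 (ι.obj Y))) := nat _
      rw [reassoc_of% n1, ← ι.map_comp, ha W X Y, ← Functor.map_comp]
      exact (nat _).symm
    rw [c3]
    simp only [Functor.map_comp, Category.assoc]
    rw [ha' W (rtensor ι X Y) Z]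
    simp only [← Functor.map_comp_assoc, ← Functor.map_comp]
    congr 1
    simp only [comp_tensor_id, Category.assoc]
    congr 1
    have c5 : ((𝟙 (ι.obj W) ⊗ₘ (reflectorAdjunction ι).unit.app (ι.obj X ⊗ ι.obj Y)) ⊗ₘ 𝟙 (ι.obj Z)) ≫
        (α_ (ι.obj W) (ι.obj ((reflector ι).obj (ι.obj X ⊗ ι.obj Y))) (ι.obj Z)).hom =
        (α_ (ι.obj W) (ι.obj X ⊗ ι.obj Y) (ι.obj Z)).hom ≫
          (𝟙 (ι.obj W) ⊗ₘ ((reflectorAdjunction ι).unit.app (ι.obj X ⊗ ι.obj Y) ⊗ₘ 𝟙 (ι.obj Z))) :=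
      associator_naturality (𝟙 (ι.obj W)) ((reflectorAdjunction ι).unit.app (ι.obj X ⊗ ι.obj Y))
        (𝟙 (ι.obj Z))
    rw [reassoc_of% c5]
    congr 1
    have c6 : ((reflectorAdjunction ι).unit.app (ι.obj X ⊗ ι.obj Y) ⊗ₘ 𝟙 (ι.obj Z)) ≫
        (reflectorAdjunction ι).unit.app
          (ι.obj ((reflector ι).obj (ι.obj X ⊗ ι.obj Y)) ⊗ ι.obj Z) ≫ ι.map (a X Y Z) =
        (α_ (ι.obj X) (ι.obj Y) (ι.obj Z)).hom ≫
          (𝟙 (ι.obj X) ⊗ₘ (reflectorAdjunction ι).unit.app (ι.obj Y ⊗ ι.obj Z)) ≫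
          (reflectorAdjunction ι).unit.app
            (ι.obj X ⊗ ι.obj ((reflector ι).obj (ι.obj Y ⊗ ι.obj Z))) := by
      have n3 : ((reflectorAdjunction ι).unit.app (ι.obj X ⊗ ι.obj Y) ⊗ₘ 𝟙 (ι.obj Z)) ≫
          (reflectorAdjunction ι).unit.app
            (ι.obj ((reflector ι).obj (ι.obj X ⊗ ι.obj Y)) ⊗ ι.obj Z) =
          (reflectorAdjunction ι).unit.app ((ι.obj X ⊗ ι.obj Y) ⊗ ι.obj Z) ≫
            ι.map ((reflector ι).map
              ((reflectorAdjunction ι).unit.app (ι.obj X ⊗ ι.obj Y) ⊗ₘ 𝟙 (ι.obj Z))) := nat _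
      rw [reassoc_of% n3, ← ι.map_comp, ha X Y Z, ← Functor.map_comp]
      rw [← Category.assoc]
      exact (nat _).symm
    have fuse : ∀ {c c' : C} (f g : c ⟶ c') (h : f = g),
        𝟙 (ι.obj W) ⊗ₘ f = 𝟙 (ι.obj W) ⊗ₘ g := fun f g h => by rw [h]
    simp only [← id_tensor_comp]
    exact fuse _ _ (by rw [c6])
  rw [hL, hR]
  congr 1
  simp only [id_tensor_comp, tensorHom_id, id_tensorHom, Category.assoc,
    MonoidalCategory.whiskerLeft_comp]
  rw [pentagon_assoc]
end

section
/- Let C be monoidal biclosed, D reflective in C with reflector ψ and unit η, and suppose ψ(η ⊗ 1) and ψ(1 ⊗ η) are isomorphisms. Then for the reflected tensor on D, the isomorphisms hom_D(D ⊗_D D', D'') ≅ hom_C(D ⊗ D', D'') ≅ hom_C(D, D''/D') ≅ hom_D(D, D''/D') exhibit D''/D' (computed in C) as the right internal hom in D; in particular the internal homs of D are computed as in C. -/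
/-!
STATEMENT 13: `C` monoidal biclosed (left homs via `MonoidalClosed`, right homs
via adjunctions `tensorRight B ⊣ rihom B`), `D` reflective with `ψ(η ⊗ 1)` and
`ψ(1 ⊗ η)` invertible.  For `d, d', d'' : D`, the homs `d''/d'` and `d'\d''`
computed in `C` are local, and the chain of bijections
`hom_D(d ⊗_D d', d'') ≅ hom_C(d ⊗ d', d'') ≅ hom_C(d, d''/d') ≅ hom_D(d, d''/d')`
exhibits `d''/d'` (reflected into `D`, to which it is isomorphic, being local)
as the right internal hom of `D`; in particular internal homs of `D` are
computed as in `C`. Similarly on the other side.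
-/

open CategoryTheory MonoidalCategory

universe v u v' u'

lemma auxLocal {C : Type u} [Category.{v} C] {D : Type u'} [Category.{v'} D]
    (ι : D ⥤ C) [Reflective ι] {F H : C ⥤ C} (e : F ⊣ H) (d'' : D)
    (hyp : IsIso ((reflector ι).map
      (F.map ((reflectorAdjunction ι).unit.app (H.obj (ι.obj d'')))))) :
    IsIso ((reflectorAdjunction ι).unit.app (H.obj (ι.obj d''))) := by
  set adj := reflectorAdjunction ι with hadj
  set X := H.obj (ι.obj d'') with hX
  let g : (reflector ι).obj (F.obj X) ⟶ d'' :=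
    (adj.homEquiv _ _).symm (e.counit.app (ι.obj d''))
  let k : F.obj (ι.obj ((reflector ι).obj X)) ⟶ ι.obj d'' :=
    adj.homEquiv _ _ (inv ((reflector ι).map (F.map (adj.unit.app X))) ≫ g)
  let r : ι.obj ((reflector ι).obj X) ⟶ X := (e.homEquiv _ _) k
  have hk : F.map (adj.unit.app X) ≫ k = e.counit.app (ι.obj d'') := by
    apply (adj.homEquiv _ _).symm.injective
    rw [Adjunction.homEquiv_naturality_left_symm]
    simp [k, g]
  have hr : adj.unit.app X ≫ r = 𝟙 X := by
    have h2 : (e.homEquiv _ _) (F.map (adj.unit.app X) ≫ k) = adj.unit.app X ≫ r :=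
      e.homEquiv_naturality_left _ _
    rw [← h2, hk]
    simp only [Adjunction.homEquiv_unit]
    exact e.right_triangle_components _
  have : IsSplitMono (adj.unit.app X) := IsSplitMono.mk' ⟨r, hr⟩
  exact Functor.essImage.unit_isIso mem_essImage_of_unit_isSplitMono

theorem stmt13 {C : Type u} [Category.{v} C] {D : Type u'} [Category.{v'} D]
    [MonoidalCategory C] [MonoidalClosed C]
    (rihom : C → C ⥤ C) (radj : ∀ B : C, tensorRight B ⊣ rihom B)
    (ι : D ⥤ C) [Reflective ι]
    (h1 : ∀ B B' : C,
      IsIso ((reflector ι).map ((reflectorAdjunction ι).unit.app B ⊗ₘ 𝟙 B')))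
    (h2 : ∀ B B' : C,
      IsIso ((reflector ι).map (𝟙 B ⊗ₘ (reflectorAdjunction ι).unit.app B')))
    (d d' d'' : D) :
    IsIso ((reflectorAdjunction ι).unit.app ((rihom (ι.obj d')).obj (ι.obj d''))) ∧
    IsIso ((reflectorAdjunction ι).unit.app ((ihom (ι.obj d')).obj (ι.obj d''))) ∧
    Nonempty
      (((reflector ι).obj (ι.obj d ⊗ ι.obj d') ⟶ d'') ≃
        (ι.obj d ⊗ ι.obj d' ⟶ ι.obj d'')) ∧
    Nonempty
      ((ι.obj d ⊗ ι.obj d' ⟶ ι.obj d'') ≃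
        (ι.obj d ⟶ (rihom (ι.obj d')).obj (ι.obj d''))) ∧
    Nonempty
      (((reflector ι).obj (ι.obj d ⊗ ι.obj d') ⟶ d'') ≃
        (d ⟶ (reflector ι).obj ((rihom (ι.obj d')).obj (ι.obj d'')))) ∧
    Nonempty
      (((reflector ι).obj (ι.obj d' ⊗ ι.obj d) ⟶ d'') ≃
        (d ⟶ (reflector ι).obj ((ihom (ι.obj d')).obj (ι.obj d'')))) := by
  have p1 : IsIso ((reflectorAdjunction ι).unit.app
      ((rihom (ι.obj d')).obj (ι.obj d''))) := by
    refine auxLocal ι (radj (ι.obj d')) d'' ?_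
    have := h1 ((rihom (ι.obj d')).obj (ι.obj d'')) (ι.obj d')
    simpa [tensorHom_id] using this
  have p2 : IsIso ((reflectorAdjunction ι).unit.app
      ((ihom (ι.obj d')).obj (ι.obj d''))) := by
    refine auxLocal ι (ihom.adjunction (ι.obj d')) d'' ?_
    have := h2 (ι.obj d') ((ihom (ι.obj d')).obj (ι.obj d''))
    simpa [id_tensorHom] using this
  haveI := p1
  haveI := p2
  have ff := Functor.fullyFaithfulOfReflective ι
  refine ⟨p1, p2, ⟨(reflectorAdjunction ι).homEquiv _ _⟩,
    ⟨(radj (ι.obj d')).homEquiv (ι.obj d) (ι.obj d'')⟩,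
    ⟨(((reflectorAdjunction ι).homEquiv _ _).trans
      ((radj (ι.obj d')).homEquiv (ι.obj d) (ι.obj d''))).trans
      ((Iso.homCongr (Iso.refl (ι.obj d))
        (asIso ((reflectorAdjunction ι).unit.app _))).trans (ff.homEquiv.symm))⟩,
    ⟨(((reflectorAdjunction ι).homEquiv _ _).trans
      ((ihom.adjunction (ι.obj d')).homEquiv (ι.obj d) (ι.obj d''))).trans
      ((Iso.homCongr (Iso.refl (ι.obj d))
        (asIso ((reflectorAdjunction ι).unit.app _))).trans (ff.homEquiv.symm))⟩⟩
end

section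
/- Let C be a symmetric monoidal closed category and D a reflective full subcategory with reflector ψ. If every internal hom [B, E] with E local is local, then the full subcategory D is an exponential ideal for the internal hom, and the reflector ψ : C → D preserves the monoidal unit up to the universal map, the composite ψ(B ⊗ B') → ψ(ψB ⊗ ψB') being invertible; consequently the idempotent monad ψ is a symmetric monoidal (Hopf-type strong) monad for the tensor on C. -/
/-!
STATEMENT 15: `C` symmetric monoidal closed, `D` reflective; if `[B, E]` is
local whenever `E` is local (exponential ideal), then: `D` is an exponential
ideal; the composite `ψ(B ⊗ B') ⟶ ψ(ψB ⊗ ψB')`, i.e. `ψ(η ⊗ η)`, is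
invertible; and the idempotent monad `T = ψ ⋙ ι` carries maps
`μ : TB ⊗ TB' ⟶ T(B ⊗ B')` and `I ⟶ TI` (the unit `η_I`) making it a
monoidal monad: `μ` is natural, compatible with the unit `η` and with the
multiplication of the monad.
-/

open CategoryTheory MonoidalCategory

universe v u v' u'

section Aux

variable {C : Type u} [Category.{v} C] {D : Type u'} [Category.{v'} D]
  [MonoidalCategory C] [SymmetricCategory C] [MonoidalClosed C]
  (ι : D ⥤ C) [Reflective ι]

set_option linter.unusedSectionVars false

lemma day_precomp_bij {X Y Z : C} (e : X ⟶ Y) [IsIso e] :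
    Function.Bijective (fun h : Y ⟶ Z => e ≫ h) :=
  ⟨fun a b hab => by rwa [cancel_epi] at hab, fun g => ⟨inv e ≫ g, by simp⟩⟩

lemma day_unit_bij {E : C} (hE : IsIso ((reflectorAdjunction ι).unit.app E)) (X : C) :
    Function.Bijective (fun h : ι.obj ((reflector ι).obj X) ⟶ E =>
      (reflectorAdjunction ι).unit.app X ≫ h) := by
  have hmem : ι.essImage E := (reflectorAdjunction ι).mem_essImage_of_unit_isIso E
  have : (fun h : ι.obj ((reflector ι).obj X) ⟶ E =>
      (reflectorAdjunction ι).unit.app X ≫ h) = (unitCompPartialBijective X hmem).symm := by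
    funext h
    rw [unitCompPartialBijective_symm_apply]
  rw [this]
  exact (unitCompPartialBijective X hmem).symm.bijective

lemma day_whiskerLeft_bij
    (hideal : ∀ B E : C, IsIso ((reflectorAdjunction ι).unit.app E) →
      IsIso ((reflectorAdjunction ι).unit.app ((ihom B).obj E)))
    {E : C} (hE : IsIso ((reflectorAdjunction ι).unit.app E)) (X B : C) :
    Function.Bijective (fun h : X ⊗ ι.obj ((reflector ι).obj B) ⟶ E =>
      (X ◁ (reflectorAdjunction ι).unit.app B) ≫ h) := by
  have h1 := day_unit_bij ι (hideal X E hE) B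
  have heq : (fun h : X ⊗ ι.obj ((reflector ι).obj B) ⟶ E =>
        (X ◁ (reflectorAdjunction ι).unit.app B) ≫ h)
      = (MonoidalClosed.uncurry (A := X)) ∘
        (fun h : ι.obj ((reflector ι).obj B) ⟶ (ihom X).obj E =>
          (reflectorAdjunction ι).unit.app B ≫ h) ∘ (MonoidalClosed.curry (A := X)) := by
    funext h
    simp only [Function.comp_apply, ← MonoidalClosed.curry_natural_left,
      MonoidalClosed.uncurry_curry]
  rw [heq]
  exact (((ihom.adjunction X).homEquiv _ _).symm.bijective).comp
    (h1.comp ((ihom.adjunction X).homEquiv _ _).bijective)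

lemma day_whiskerRight_bij
    (hideal : ∀ B E : C, IsIso ((reflectorAdjunction ι).unit.app E) →
      IsIso ((reflectorAdjunction ι).unit.app ((ihom B).obj E)))
    {E : C} (hE : IsIso ((reflectorAdjunction ι).unit.app E)) (X B : C) :
    Function.Bijective (fun h : ι.obj ((reflector ι).obj B) ⊗ X ⟶ E =>
      ((reflectorAdjunction ι).unit.app B ▷ X) ≫ h) := by
  have h1 := day_whiskerLeft_bij ι hideal hE X B
  have heq : (fun h : ι.obj ((reflector ι).obj B) ⊗ X ⟶ E =>
        ((reflectorAdjunction ι).unit.app B ▷ X) ≫ h)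
      = (fun h : X ⊗ B ⟶ E => (β_ B X).hom ≫ h) ∘
        (fun h : X ⊗ ι.obj ((reflector ι).obj B) ⟶ E =>
          (X ◁ (reflectorAdjunction ι).unit.app B) ≫ h) ∘
        (fun h : ι.obj ((reflector ι).obj B) ⊗ X ⟶ E =>
          (β_ X (ι.obj ((reflector ι).obj B))).hom ≫ h) := by
    funext h
    simp only [Function.comp_apply, ← Category.assoc]
    congr 1
    simp [SymmetricCategory.symmetry_assoc]
  rw [heq]
  exact ((day_precomp_bij (Z := E) (β_ B X).hom).comp
    (h1.comp (day_precomp_bij (β_ X (ι.obj ((reflector ι).obj B))).hom)))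

lemma day_tensorUnit_bij
    (hideal : ∀ B E : C, IsIso ((reflectorAdjunction ι).unit.app E) →
      IsIso ((reflectorAdjunction ι).unit.app ((ihom B).obj E)))
    {E : C} (hE : IsIso ((reflectorAdjunction ι).unit.app E)) (B B' : C) :
    Function.Bijective (fun h : ι.obj ((reflector ι).obj B) ⊗ ι.obj ((reflector ι).obj B') ⟶ E =>
      ((reflectorAdjunction ι).unit.app B ⊗ₘ (reflectorAdjunction ι).unit.app B') ≫ h) := by
  have heq : (fun h : ι.obj ((reflector ι).obj B) ⊗ ι.obj ((reflector ι).obj B') ⟶ E =>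
        ((reflectorAdjunction ι).unit.app B ⊗ₘ (reflectorAdjunction ι).unit.app B') ≫ h)
      = (fun h : B ⊗ B' ⟶ E => h) ∘
        (fun h : ι.obj ((reflector ι).obj B) ⊗ B' ⟶ E =>
          ((reflectorAdjunction ι).unit.app B ▷ B') ≫ h) ∘
        (fun h : ι.obj ((reflector ι).obj B) ⊗ ι.obj ((reflector ι).obj B') ⟶ E =>
          (ι.obj ((reflector ι).obj B) ◁ (reflectorAdjunction ι).unit.app B') ≫ h) := by
    funext h
    simp [MonoidalCategory.tensorHom_def]
  rw [heq]
  exact (day_whiskerRight_bij ι hideal hE B' B).comp (day_whiskerLeft_bij ι hideal hE _ B')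



lemma day_reflector_map_isIso
    (hideal : ∀ B E : C, IsIso ((reflectorAdjunction ι).unit.app E) →
      IsIso ((reflectorAdjunction ι).unit.app ((ihom B).obj E)))
    (B B' : C) :
    IsIso ((reflector ι).map
      ((reflectorAdjunction ι).unit.app B ⊗ₘ (reflectorAdjunction ι).unit.app B')) := by
  set adj := reflectorAdjunction ι with hadj
  set e : B ⊗ B' ⟶ ι.obj ((reflector ι).obj B) ⊗ ι.obj ((reflector ι).obj B') :=
    adj.unit.app B ⊗ₘ adj.unit.app B' with he
  have hloc : IsIso (adj.unit.app (ι.obj ((reflector ι).obj (B ⊗ B')))) := inferInstance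
  obtain ⟨r, hr⟩ := (day_tensorUnit_bij ι hideal hloc B B').surjective (adj.unit.app (B ⊗ B'))
  set s : (reflector ι).obj (ι.obj ((reflector ι).obj B) ⊗ ι.obj ((reflector ι).obj B')) ⟶
      (reflector ι).obj (B ⊗ B') :=
    (reflector ι).map r ≫ adj.counit.app ((reflector ι).obj (B ⊗ B')) with hs
  have hr' : e ≫ r = adj.unit.app (B ⊗ B') := hr
  have h1 : (reflector ι).map e ≫ s = 𝟙 _ := by
    rw [hs, ← Category.assoc, ← (reflector ι).map_comp, hr']
    exact adj.left_triangle_components (B ⊗ B')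
  have h2 : s ≫ (reflector ι).map e = 𝟙 _ := by
    apply (adj.homEquiv _ _).injective
    have hloc2 : IsIso (adj.unit.app
        (ι.obj ((reflector ι).obj (ι.obj ((reflector ι).obj B) ⊗
          ι.obj ((reflector ι).obj B'))))) := inferInstance
    apply (day_tensorUnit_bij ι hideal hloc2 B B').injective
    have hnat : e ≫ adj.unit.app _ = adj.unit.app (B ⊗ B') ≫ ι.map ((reflector ι).map e) := by
      simpa using adj.unit.naturality e
    show e ≫ _ = e ≫ _
    simp only [Adjunction.homEquiv_unit, Functor.map_comp, Functor.map_id, Category.comp_id]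
    rw [← Category.assoc, hnat, Category.assoc]
    slice_lhs 2 3 => rw [← ι.map_comp, h1]
    simpa using hnat.symm
  exact ⟨s, h1, h2⟩


end Aux


theorem stmt15 {C : Type u} [Category.{v} C] {D : Type u'} [Category.{v'} D]
    [MonoidalCategory C] [SymmetricCategory C] [MonoidalClosed C]
    (ι : D ⥤ C) [Reflective ι]
    (hideal : ∀ B E : C, IsIso ((reflectorAdjunction ι).unit.app E) →
      IsIso ((reflectorAdjunction ι).unit.app ((ihom B).obj E))) :
    (∀ B B' : C,
      IsIso ((reflector ι).map
        ((reflectorAdjunction ι).unit.app B ⊗ₘ (reflectorAdjunction ι).unit.app B'))) ∧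
    ∃ μ : ∀ B B' : C,
      (reflector ι ⋙ ι).obj B ⊗ (reflector ι ⋙ ι).obj B' ⟶
        (reflector ι ⋙ ι).obj (B ⊗ B'),
      (∀ {B₁ B₂ B₁' B₂' : C} (f : B₁ ⟶ B₂) (g : B₁' ⟶ B₂'),
        ((reflector ι ⋙ ι).map f ⊗ₘ (reflector ι ⋙ ι).map g) ≫ μ B₂ B₂' =
          μ B₁ B₁' ≫ (reflector ι ⋙ ι).map (f ⊗ₘ g)) ∧
      (∀ B B' : C,
        ((reflectorAdjunction ι).unit.app B ⊗ₘ (reflectorAdjunction ι).unit.app B') ≫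
            μ B B' =
          (reflectorAdjunction ι).unit.app (B ⊗ B')) ∧
      (∀ B B' : C,
        μ ((reflector ι ⋙ ι).obj B) ((reflector ι ⋙ ι).obj B') ≫
            (reflector ι ⋙ ι).map (μ B B') ≫
            ((reflectorAdjunction ι).toMonad.μ.app (B ⊗ B')) =
          (((reflectorAdjunction ι).toMonad.μ.app B) ⊗ₘ
            ((reflectorAdjunction ι).toMonad.μ.app B')) ≫ μ B B') := by
  
  have hiso := fun B B' => day_reflector_map_isIso ι hideal B B'
  refine ⟨hiso, ?_⟩
  let μ : ∀ B B' : C,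
      (reflector ι ⋙ ι).obj B ⊗ (reflector ι ⋙ ι).obj B' ⟶
        (reflector ι ⋙ ι).obj (B ⊗ B') := fun B B' =>
    (reflectorAdjunction ι).unit.app
        (ι.obj ((reflector ι).obj B) ⊗ ι.obj ((reflector ι).obj B')) ≫
      ι.map (@inv _ _ _ _ _ (hiso B B'))
  have hu : ∀ {X Y : C} (f : X ⟶ Y),
      (reflectorAdjunction ι).unit.app X ≫ (reflector ι ⋙ ι).map f =
        f ≫ (reflectorAdjunction ι).unit.app Y := fun f => by
    simpa using ((reflectorAdjunction ι).unit.naturality f).symm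
  have hunit : ∀ B B' : C,
      ((reflectorAdjunction ι).unit.app B ⊗ₘ (reflectorAdjunction ι).unit.app B') ≫ μ B B' =
        (reflectorAdjunction ι).unit.app (B ⊗ B') := by
    intro B B'
    have hn := (reflectorAdjunction ι).unit.naturality
      ((reflectorAdjunction ι).unit.app B ⊗ₘ (reflectorAdjunction ι).unit.app B')
    simp only [Functor.id_obj, Functor.id_map, Functor.comp_obj, Functor.comp_map] at hn
    show _ ≫ _ ≫ ι.map _ = _
    simp only [Functor.comp_obj]
    rw [← Category.assoc, hn, Category.assoc, ← ι.map_comp]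
    simp
  have hinj : ∀ (B B' : C) (d : D)
      (p q : ι.obj ((reflector ι).obj B) ⊗ ι.obj ((reflector ι).obj B') ⟶ ι.obj d),
      ((reflectorAdjunction ι).unit.app B ⊗ₘ (reflectorAdjunction ι).unit.app B') ≫ p =
        ((reflectorAdjunction ι).unit.app B ⊗ₘ (reflectorAdjunction ι).unit.app B') ≫ q →
        p = q :=
    fun B B' d p q h => (day_tensorUnit_bij ι hideal inferInstance B B').injective h
  have hm : ∀ X : C, (reflectorAdjunction ι).toMonad.μ.app X =
      ι.map ((reflectorAdjunction ι).counit.app ((reflector ι).obj X)) := fun X => rfl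
  have hrt : ∀ X : C, (reflectorAdjunction ι).unit.app (ι.obj ((reflector ι).obj X)) ≫
      ι.map ((reflectorAdjunction ι).counit.app ((reflector ι).obj X)) = 𝟙 _ :=
    fun X => (reflectorAdjunction ι).right_triangle_components _
  refine ⟨μ, ?_, hunit, ?_⟩
  · intro B₁ B₂ B₁' B₂' f g
    apply hinj B₁ B₁' ((reflector ι).obj (B₂ ⊗ B₂'))
    conv_lhs => rw [← Category.assoc, MonoidalCategory.tensorHom_comp_tensorHom, hu f, hu g,
      ← MonoidalCategory.tensorHom_comp_tensorHom, Category.assoc, hunit B₂ B₂']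
    conv_rhs => rw [← Category.assoc, hunit B₁ B₁', hu (f ⊗ₘ g)]
  · intro B B'
    apply hinj ((reflector ι ⋙ ι).obj B) ((reflector ι ⋙ ι).obj B')
      ((reflector ι).obj (B ⊗ B'))
    simp only [Functor.comp_obj]
    conv_lhs => erw [← Category.assoc,
      hunit (ι.obj ((reflector ι).obj B)) (ι.obj ((reflector ι).obj B')),
      ← Category.assoc, hu, Category.assoc, hm (B ⊗ B')]
    conv_rhs => erw [← Category.assoc, MonoidalCategory.tensorHom_comp_tensorHom, hm B, hm B',
      hrt B, hrt B', MonoidalCategory.id_tensorHom_id, Category.id_comp]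
    simp only [Functor.comp_obj]
    rw [hrt (B ⊗ B')]
    simp
end
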